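/- For 0 < J < J_c := 1/(4(3−2√2)) and any h ∈ ℝ, the function m ↦ p̃(m,h,J) = −J m² + J/2 + p((2m−1)J+h) is strictly concave on ℝ; in particular the consistency equation m = g((2m−1)J + h) has exactly one solution. -/

import Mathlib

open Real

noncomputable def gH (h : ℝ) : ℝ :=
  (Real.sqrt (Real.exp (4 * h) + 4 * Real.exp (2 * h)) - Real.exp (2 * h)) / 2

noncomputable def pH (h : ℝ) : ℝ :=
  -(1 - gH h) / 2 - (1 / 2) * Real.log (1 - gH h)

noncomputable def pTilde (m h J : ℝ) : ℝ :=
  -J * m ^ 2 + J / 2 + pH ((2 * m - 1) * J + h)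

noncomputable def dgH (h : ℝ) : ℝ :=
  ((4 * Real.exp (4 * h) + 8 * Real.exp (2 * h)) /
      (2 * Real.sqrt (Real.exp (4 * h) + 4 * Real.exp (2 * h))) - 2 * Real.exp (2 * h)) / 2

lemma exp4 (x : ℝ) : Real.exp (4 * x) = Real.exp (2 * x) ^ 2 := by
  rw [sq, ← Real.exp_add]; ring_nf

-- basic facts with u = exp(2h), s = sqrt(u^2+4u)
lemma sfacts (u : ℝ) (hu : 0 < u) :
    u < Real.sqrt (u ^ 2 + 4 * u) ∧ Real.sqrt (u ^ 2 + 4 * u) < u + 2 ∧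
      Real.sqrt (u ^ 2 + 4 * u) ^ 2 = u ^ 2 + 4 * u := by
  have h1 : Real.sqrt (u ^ 2 + 4 * u) ^ 2 = u ^ 2 + 4 * u :=
    Real.sq_sqrt (by nlinarith)
  have hs0 : 0 ≤ Real.sqrt (u ^ 2 + 4 * u) := Real.sqrt_nonneg _
  refine ⟨?_, ?_, h1⟩
  · nlinarith [sq_nonneg (Real.sqrt (u ^ 2 + 4 * u) - u)]
  · nlinarith [sq_nonneg (Real.sqrt (u ^ 2 + 4 * u) - u - 2)]

lemma gH_eq (h : ℝ) : gH h = (Real.sqrt (Real.exp (2*h) ^ 2 + 4 * Real.exp (2*h)) - Real.exp (2*h)) / 2 := by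
  rw [gH, exp4]

lemma gH_pos (h : ℝ) : 0 < gH h := by
  rw [gH_eq]
  have := sfacts (Real.exp (2*h)) (Real.exp_pos _)
  linarith [this.1]

lemma gH_lt_one (h : ℝ) : gH h < 1 := by
  rw [gH_eq]
  have := sfacts (Real.exp (2*h)) (Real.exp_pos _)
  linarith [this.2.1]

lemma hasDerivAt_gH (h : ℝ) : HasDerivAt gH (dgH h) h := by
  have hE : HasDerivAt (fun x => Real.exp (4 * x) + 4 * Real.exp (2 * x))
      (4 * Real.exp (4 * h) + 8 * Real.exp (2 * h)) h := by
    have h1 : HasDerivAt (fun x : ℝ => Real.exp (4 * x)) (Real.exp (4 * h) * (4 * 1)) h := by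
      simpa using ((hasDerivAt_id h).const_mul (4:ℝ)).exp
    have h2 : HasDerivAt (fun x : ℝ => Real.exp (2 * x)) (Real.exp (2 * h) * (2 * 1)) h := by
      simpa using ((hasDerivAt_id h).const_mul (2:ℝ)).exp
    have := h1.add (h2.const_mul 4)
    exact this.congr_deriv (by ring)
  have hEpos : (0:ℝ) < Real.exp (4 * h) + 4 * Real.exp (2 * h) := by positivity
  have hs : HasDerivAt (fun x => Real.sqrt (Real.exp (4 * x) + 4 * Real.exp (2 * x)))
      (1 / (2 * Real.sqrt (Real.exp (4 * h) + 4 * Real.exp (2 * h))) *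
        (4 * Real.exp (4 * h) + 8 * Real.exp (2 * h))) h :=
    (Real.hasDerivAt_sqrt hEpos.ne').comp h hE
  have h2 : HasDerivAt (fun x : ℝ => Real.exp (2 * x)) (Real.exp (2 * h) * (2 * 1)) h := by
    simpa using ((hasDerivAt_id h).const_mul (2:ℝ)).exp
  have := (hs.sub h2).div_const 2
  exact this.congr_deriv (by rw [dgH]; ring)

lemma dgH_eq (h : ℝ) :
    dgH h = Real.exp (2*h) * (Real.exp (2*h) + 2 - Real.sqrt (Real.exp (2*h) ^ 2 + 4 * Real.exp (2*h))) /
      Real.sqrt (Real.exp (2*h) ^ 2 + 4 * Real.exp (2*h)) := by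
  set u := Real.exp (2*h) with hu
  have hu0 : 0 < u := Real.exp_pos _
  obtain ⟨h1, h2, h3⟩ := sfacts u hu0
  set s := Real.sqrt (u ^ 2 + 4 * u) with hs
  have hs0 : 0 < s := lt_trans hu0 h1
  rw [dgH, exp4, ← hu, ← hs]
  field_simp
  nlinarith [h3]

lemma dgH_le (h : ℝ) : dgH h ≤ 6 - 4 * Real.sqrt 2 := by
  rw [dgH_eq]
  set u := Real.exp (2*h) with hu
  have hu0 : 0 < u := Real.exp_pos _
  obtain ⟨h1, h2, h3⟩ := sfacts u hu0
  set s := Real.sqrt (u ^ 2 + 4 * u) with hs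
  have hs0 : 0 < s := lt_trans hu0 h1
  have hr2 : Real.sqrt 2 ^ 2 = 2 := Real.sq_sqrt (by norm_num)
  have hr2' : (1:ℝ) < Real.sqrt 2 := by
    nlinarith [Real.sqrt_nonneg 2]
  have hr2'' : Real.sqrt 2 < 3/2 := by
    nlinarith [Real.sqrt_nonneg 2]
  set c : ℝ := 6 - 4 * Real.sqrt 2 with hc
  have hc0 : 0 < c := by rw [hc]; nlinarith
  -- key : u*(u+2) ≤ (u+c)*s
  have key : u * (u + 2) ≤ (u + c) * s := by
    have hsq : (u * (u + 2)) ^ 2 ≤ ((u + c) * s) ^ 2 := by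
      have : ((u + c) * s) ^ 2 = (u + c) ^ 2 * (u ^ 2 + 4 * u) := by
        rw [mul_pow, h3]
      rw [this]
      have iden : (u + c) ^ 2 * (u ^ 2 + 4 * u) - (u * (u + 2)) ^ 2 =
          2 * c * u * (u - (2 * Real.sqrt 2 - 2)) ^ 2 := by
        rw [hc]
        linear_combination (-16 * u ^ 2 + (32 * Real.sqrt 2 - 48) * u) * hr2
      nlinarith [iden, mul_nonneg (mul_nonneg (mul_nonneg (by norm_num : (0:ℝ) ≤ 2) hc0.le) hu0.le)
        (sq_nonneg (u - (2 * Real.sqrt 2 - 2)))]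
    nlinarith [mul_pos (by linarith : (0:ℝ) < u + c) hs0, mul_pos hu0 (by linarith : (0:ℝ) < u + 2)]
  rw [div_le_iff₀ hs0]
  nlinarith [key]


lemma hasDerivAt_pH (h : ℝ) : HasDerivAt pH (gH h) h := by
  have hg := hasDerivAt_gH h
  have h1g : 0 < 1 - gH h := by linarith [gH_lt_one h]
  have ha : HasDerivAt (fun x => -(1 - gH x) / 2) (dgH h / 2) h := by
    have := ((hasDerivAt_const h (1:ℝ)).sub hg).neg.div_const 2
    exact this.congr_deriv (by ring)
  have hb : HasDerivAt (fun x => (1/2 : ℝ) * Real.log (1 - gH x))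
      ((1/2) * ((0 - dgH h) / (1 - gH h))) h :=
    (((hasDerivAt_const h (1:ℝ)).sub hg).log h1g.ne').const_mul (1/2)
  have hD := ha.sub hb
  have hid : dgH h * (2 - gH h) = 2 * gH h * (1 - gH h) := by
    rw [dgH_eq, gH_eq]
    set u := Real.exp (2*h) with hu
    have hu0 : 0 < u := Real.exp_pos _
    obtain ⟨h1, h2, h3⟩ := sfacts u hu0
    set s := Real.sqrt (u ^ 2 + 4 * u) with hs
    have hs0 : 0 < s := lt_trans hu0 h1
    clear_value s u
    field_simp
    ring_nf
    apply le_antisymm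
    · nlinarith [h3, sq_nonneg (s - u), sq_nonneg (s - u - 2)]
    · nlinarith [h3, sq_nonneg (s - u), sq_nonneg (s - u - 2)]
  have key : dgH h / 2 - (1/2) * ((0 - dgH h) / (1 - gH h)) = gH h := by
    have e1 : dgH h / 2 - (1/2) * ((0 - dgH h) / (1 - gH h))
        = dgH h * (2 - gH h) / (2 * (1 - gH h)) := by
      field_simp
      ring
    rw [e1, hid]
    field_simp
  rw [key] at hD
  exact hD

lemma hasDerivAt_pTilde (h J m : ℝ) :
    HasDerivAt (fun m => pTilde m h J) (2 * J * (gH ((2 * m - 1) * J + h) - m)) m := by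
  have hin : HasDerivAt (fun m : ℝ => (2 * m - 1) * J + h) (2 * J) m := by
    have := ((((hasDerivAt_id m).const_mul (2:ℝ)).sub_const 1).mul_const J).add_const h
    simpa using this
  have hp : HasDerivAt (fun m : ℝ => pH ((2 * m - 1) * J + h))
      (gH ((2 * m - 1) * J + h) * (2 * J)) m := (hasDerivAt_pH _).comp m hin
  have hq : HasDerivAt (fun m : ℝ => -J * m ^ 2) (-J * (2 * m)) m := by
    have := (hasDerivAt_pow 2 m).const_mul (-J)
    simpa using this
  have := (hq.add_const (J/2)).add hp
  exact this.congr_deriv (by ring)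

lemma hasDerivAt_phi (h J m : ℝ) :
    HasDerivAt (fun m : ℝ => gH ((2 * m - 1) * J + h) - m)
      (dgH ((2 * m - 1) * J + h) * (2 * J) - 1) m := by
  have hin : HasDerivAt (fun m : ℝ => (2 * m - 1) * J + h) (2 * J) m := by
    have := ((((hasDerivAt_id m).const_mul (2:ℝ)).sub_const 1).mul_const J).add_const h
    simpa using this
  have := ((hasDerivAt_gH _).comp m hin).sub (hasDerivAt_id m)
  exact this


/-- for `0 < J < J_c = 1/(4(3−2√2))` and any `h`, `m ↦ p̃(m,h,J)` is
strictly concave on `ℝ`; in particular `m = g((2m−1)J + h)` has exactly one solution. -/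
theorem stmt15 (h J : ℝ) (hJ0 : 0 < J) (hJ : J < 1 / (4 * (3 - 2 * Real.sqrt 2))) :
    StrictConcaveOn ℝ Set.univ (fun m : ℝ => pTilde m h J) ∧
    ∃! m : ℝ, m = gH ((2 * m - 1) * J + h) := by
  have hr2 : Real.sqrt 2 ^ 2 = 2 := Real.sq_sqrt (by norm_num)
  have hr2' : (1:ℝ) < Real.sqrt 2 := by nlinarith [Real.sqrt_nonneg 2]
  have hr2'' : Real.sqrt 2 < 3/2 := by nlinarith [Real.sqrt_nonneg 2]
  have hcpos : (0:ℝ) < 4 * (3 - 2 * Real.sqrt 2) := by nlinarith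
  have hJc : J * (4 * (3 - 2 * Real.sqrt 2)) < 1 := by
    rw [lt_div_iff₀ hcpos] at hJ; exact hJ
  -- key slope bound: for all ξ, dgH ξ * (2*J) - 1 < 0
  have hslope : ∀ ξ : ℝ, dgH ξ * (2 * J) - 1 < 0 := by
    intro ξ
    have hle := dgH_le ξ
    nlinarith
  have hphi' : ∀ m : ℝ, deriv (fun m : ℝ => gH ((2 * m - 1) * J + h) - m) m < 0 := by
    intro m
    rw [(hasDerivAt_phi h J m).deriv]
    exact hslope _
  have hanti : StrictAnti (fun m : ℝ => gH ((2 * m - 1) * J + h) - m) :=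
    strictAnti_of_deriv_neg hphi'
  constructor
  · apply strictConcaveOn_univ_of_deriv2_neg
    · exact Differentiable.continuous fun m => (hasDerivAt_pTilde h J m).differentiableAt
    · intro x
      have hd : deriv (fun m => pTilde m h J)
          = fun m => 2 * J * (gH ((2 * m - 1) * J + h) - m) :=
        funext fun m => (hasDerivAt_pTilde h J m).deriv
      have : deriv^[2] (fun m => pTilde m h J) x
          = deriv (deriv (fun m => pTilde m h J)) x := rfl
      rw [this, hd]
      have hD2 : HasDerivAt (fun m : ℝ => 2 * J * (gH ((2 * m - 1) * J + h) - m))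
          (2 * J * (dgH ((2 * x - 1) * J + h) * (2 * J) - 1)) x :=
        (hasDerivAt_phi h J x).const_mul (2 * J)
      rw [hD2.deriv]
      have := hslope ((2 * x - 1) * J + h)
      nlinarith
  · have hcont : Continuous (fun m : ℝ => gH ((2 * m - 1) * J + h) - m) :=
      Differentiable.continuous fun m => (hasDerivAt_phi h J m).differentiableAt
    have h0 : (0:ℝ) < gH ((2 * (0:ℝ) - 1) * J + h) - 0 := by
      simpa using gH_pos ((2 * (0:ℝ) - 1) * J + h)
    have h1 : gH ((2 * (1:ℝ) - 1) * J + h) - 1 < 0 := by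
      linarith [gH_lt_one ((2 * (1:ℝ) - 1) * J + h)]
    obtain ⟨m, hmIcc, hm0⟩ := intermediate_value_Icc' (by norm_num : (0:ℝ) ≤ 1)
      hcont.continuousOn (Set.mem_Icc.mpr ⟨h1.le, h0.le⟩)
    have hm0' : gH ((2 * m - 1) * J + h) - m = 0 := hm0
    refine ⟨m, by linarith, fun y hy => ?_⟩
    have hy' : y = gH ((2 * y - 1) * J + h) := hy
    have hy0 : gH ((2 * y - 1) * J + h) - y = 0 := by linarith
    apply hanti.injective
    show gH ((2 * y - 1) * J + h) - y = gH ((2 * m - 1) * J + h) - m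
    rw [hy0, hm0']
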